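/- Key identity for the cup-i construction (homotopy relation): for any simplicial complex X, integer i, and n-simplex x, ∂(Δ_i(x)) + Δ_i(∂x) = (1+T)Δ_{i-1}(x) in C_•(X;𝔽₂)⊗C_•(X;𝔽₂), where T is the transposition of tensor factors. -/

import Mathlib

open scoped TensorProduct

def posIn (S : Finset ℕ) (u : ℕ) : ℕ := (S.filter (fun v => v ≤ u)).card
def idxFun (U : Finset ℕ) (u : ℕ) : ℕ := (u + posIn U u) % 2
def part0 (U : Finset ℕ) : Finset ℕ := U.filter (fun u => idxFun U u = 0)
def part1 (U : Finset ℕ) : Finset ℕ := U.filter (fun u => idxFun U u = 1)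

variable {V : Type} [LinearOrder V]

/-- `dFace U x` deletes from the simplex `x` the vertices in (0-based) positions `U`. -/
def dFace (U : Finset ℕ) (x : Finset V) : Finset V :=
  ((((x.sort (· ≤ ·)).zipIdx.map Prod.swap).filter (fun p => decide (p.1 ∉ U))).map Prod.snd).toFinset

/-- Mod 2 simplicial chains: the free `𝔽₂`-module on simplices (finite subsets of `V`). -/
abbrev Chains (V : Type) [LinearOrder V] := Finset V →₀ ZMod 2


noncomputable instance {V : Type} [LinearOrder V] :
    Zero (TensorProduct (ZMod 2) (Chains V) (Chains V)) :=
  (inferInstance : AddCommMonoid (TensorProduct (ZMod 2) (Chains V) (Chains V))).toAddMonoid.toZero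

/-- Basis chain corresponding to a simplex. -/
noncomputable def eC (x : Finset V) : Chains V := Finsupp.single x 1

/-- The cup-`i` coproduct on a basis simplex. -/
noncomputable def deltaSimplex (i : ℤ) (x : Finset V) :
    TensorProduct (ZMod 2) (Chains V) (Chains V) :=
  if 0 ≤ i ∧ i ≤ (x.card : ℤ) - 1 then
    ∑ U ∈ Finset.powersetCard (x.card - 1 - i.toNat) (Finset.range x.card),
      eC (dFace (part0 U) x) ⊗ₜ[ZMod 2] eC (dFace (part1 U) x)
  else (0 : TensorProduct (ZMod 2) (Chains V) (Chains V))

/-- The cup-`i` coproduct `Δᵢ`, as a linear map on chains. -/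
noncomputable def deltaMap (V : Type) [LinearOrder V] (i : ℤ) :
    Chains V →ₗ[ZMod 2] TensorProduct (ZMod 2) (Chains V) (Chains V) :=
  Finsupp.lift _ (ZMod 2) (Finset V) (deltaSimplex i)

/-- Mod 2 boundary of a basis simplex. -/
noncomputable def bdSimplex (x : Finset V) : Chains V :=
  if 2 ≤ x.card then ∑ i ∈ Finset.range x.card, eC (dFace {i} x) else 0

/-- Mod 2 simplicial boundary `∂ = Σ dᵢ`. -/
noncomputable def bdMap (V : Type) [LinearOrder V] : Chains V →ₗ[ZMod 2] Chains V :=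
  Finsupp.lift _ (ZMod 2) (Finset V) bdSimplex

/-- Boundary on the tensor product: `∂(a⊗b) = ∂a⊗b + a⊗∂b` (signs trivial mod 2). -/
noncomputable def bdT (V : Type) [LinearOrder V] :
    TensorProduct (ZMod 2) (Chains V) (Chains V) →ₗ[ZMod 2]
      TensorProduct (ZMod 2) (Chains V) (Chains V) :=
  TensorProduct.map (bdMap V) LinearMap.id + TensorProduct.map LinearMap.id (bdMap V)

/-- Transposition of tensor factors `T(a⊗b) = b⊗a`. -/
noncomputable def transp (V : Type) [LinearOrder V] :
    TensorProduct (ZMod 2) (Chains V) (Chains V) →ₗ[ZMod 2]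
      TensorProduct (ZMod 2) (Chains V) (Chains V) :=
  (TensorProduct.comm (ZMod 2) (Chains V) (Chains V)).toLinearMap

/-- Chain map induced by a simplicial (monotone) map `f`. -/
noncomputable def fChain {W : Type} [LinearOrder W] (f : V → W) :
    Chains V →ₗ[ZMod 2] Chains W :=
  Finsupp.lift _ (ZMod 2) (Finset V)
    (fun x => if (x.image f).card = x.card then eC (x.image f) else 0)

/-- Evaluation of a cochain on chains. -/
noncomputable def evalCochain (α : Finset V → ZMod 2) : Chains V →ₗ[ZMod 2] ZMod 2 :=
  Finsupp.lift _ (ZMod 2) (Finset V) α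

/-- Evaluation of a tensor of cochains on a tensor of chains. -/
noncomputable def pairing (α β : Finset V → ZMod 2) :
    TensorProduct (ZMod 2) (Chains V) (Chains V) →ₗ[ZMod 2] ZMod 2 :=
  (LinearMap.mul' (ZMod 2) (ZMod 2)) ∘ₗ TensorProduct.map (evalCochain α) (evalCochain β)

/-- Indicator cochain of a single simplex. -/
def indC (a : Finset V) : Finset V → ZMod 2 := fun y => if y = a then 1 else 0

section Work
variable {V : Type} [LinearOrder V]

/-- rank of `v` within `x`. -/
def rk (x : Finset V) (v : V) : ℕ := (x.filter (· < v)).card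

lemma auxList : ∀ (l : List V), l.Pairwise (· < ·) → ∀ (n : ℕ) (q : ℕ → Bool),
    (((l.zipIdx n).map Prod.swap).filter (fun p => q p.1)).map Prod.snd
      = l.filter (fun v => q (n + l.countP (fun w => decide (w < v))))
  | [], _, n, q => by simp
  | a :: t, hl, n, q => by
    rw [List.pairwise_cons] at hl
    rw [List.zipIdx_cons, List.map_cons, List.filter_cons]
    have IH := auxList t hl.2 (n + 1) q
    have hfc : t.filter (fun v => q ((n+1) + t.countP (fun w => decide (w < v))))
        = t.filter (fun v => q (n + (a :: t).countP (fun w => decide (w < v)))) := by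
      apply List.filter_congr
      intro v hv
      have hav : a < v := hl.1 v hv
      rw [List.countP_cons, if_pos (by simpa using hav)]
      congr 1
      omega
    have hca : (a :: t).countP (fun w => decide (w < a)) = 0 := by
      rw [List.countP_cons, if_neg (by simp), Nat.add_zero, List.countP_eq_zero]
      intro w hw
      simp only [decide_eq_true_eq]
      exact not_lt.2 (hl.1 w hw).le
    by_cases hq : q n = true
    · rw [if_pos (by simpa using hq)]
      simp only [List.map_cons, Prod.swap]
      rw [IH, hfc, List.filter_cons, if_pos (by rw [hca]; simpa using hq)]
    · rw [if_neg (by simpa using hq)]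
      rw [IH, hfc, List.filter_cons, if_neg (by rw [hca]; simpa using hq)]

lemma countP_sort_eq (x : Finset V) (p : V → Prop) [DecidablePred p] :
    (x.sort (· ≤ ·)).countP (fun w => decide (p w)) = (x.filter p).card := by
  have : ((x.sort (· ≤ ·) : Multiset V)).countP p = Multiset.countP p x.val := by
    rw [Finset.sort_eq]
  rw [Multiset.coe_countP] at this
  rw [this]
  rw [Multiset.countP_eq_card_filter]
  rfl

lemma dFace_eq_filter (A : Finset ℕ) (x : Finset V) :
    dFace A x = x.filter (fun v => rk x v ∉ A) := by
  unfold dFace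
  rw [auxList _ (List.sortedLT_iff_pairwise.1 (Finset.sortedLT_sort x)) 0 (fun m => decide (m ∉ A))]
  have : ∀ v : V, (0 + (x.sort (· ≤ ·)).countP (fun w => decide (w < v))) = rk x v := by
    intro v
    rw [Nat.zero_add, countP_sort_eq]
    rfl
  simp only [this]
  rw [List.toFinset_filter]
  simp [Finset.sort_toFinset]

lemma rk_lt_card {x : Finset V} {v : V} (hv : v ∈ x) : rk x v < x.card := by
  apply Finset.card_lt_card
  rw [Finset.filter_ssubset]
  exact ⟨v, hv, by simp⟩

lemma rk_mono {x : Finset V} {v w : V} (h : v ≤ w) : rk x v ≤ rk x w := by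
  apply Finset.card_le_card
  intro u hu
  rw [Finset.mem_filter] at *
  exact ⟨hu.1, lt_of_lt_of_le hu.2 h⟩

lemma rk_strict {x : Finset V} {v w : V} (hv : v ∈ x) (h : v < w) : rk x v < rk x w := by
  apply Finset.card_lt_card
  constructor
  · intro u hu
    rw [Finset.mem_filter] at *
    exact ⟨hu.1, lt_trans hu.2 h⟩
  · intro hsub
    have := Finset.mem_filter.1 (hsub (Finset.mem_filter.2 ⟨hv, h⟩))
    exact absurd this.2 (lt_irrefl v)

lemma rk_injOn {x : Finset V} : Set.InjOn (rk x) x := by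
  intro v hv w hw h
  by_contra hne
  rcases lt_or_gt_of_ne hne with hlt | hgt
  · exact absurd h (Nat.ne_of_lt (rk_strict hv hlt))
  · exact absurd h.symm (Nat.ne_of_lt (rk_strict hw hgt))

lemma image_eq_range {α : Type*} [DecidableEq α] (s : Finset α) (f : α → ℕ)
    (hinj : Set.InjOn f s) (hlt : ∀ a ∈ s, f a < s.card) :
    s.image f = Finset.range s.card := by
  apply Finset.eq_of_subset_of_card_le
  · intro b hb
    rcases Finset.mem_image.1 hb with ⟨a, ha, rfl⟩
    exact Finset.mem_range.2 (hlt a ha)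
  · rw [Finset.card_range, Finset.card_image_of_injOn hinj]

lemma image_rk (x : Finset V) : x.image (rk x) = Finset.range x.card :=
  image_eq_range x (rk x) rk_injOn (fun v hv => rk_lt_card hv)

lemma rk_surj {x : Finset V} {r : ℕ} (hr : r < x.card) : ∃ v ∈ x, rk x v = r := by
  have : r ∈ x.image (rk x) := by rw [image_rk]; exact Finset.mem_range.2 hr
  rcases Finset.mem_image.1 this with ⟨v, hv, h⟩
  exact ⟨v, hv, h⟩


lemma dFace_subset (A : Finset ℕ) (x : Finset V) : dFace A x ⊆ x := by
  rw [dFace_eq_filter]; exact Finset.filter_subset _ _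

lemma rk_dFace {A : Finset ℕ} {x : Finset V} {v : V} (hv : v ∈ x) :
    rk (dFace A x) v = (Finset.range (rk x v) \ A).card := by
  rw [dFace_eq_filter]
  have hset : ((x.filter (fun w => rk x w ∉ A)).filter (· < v))
      = x.filter (fun w => w < v ∧ rk x w ∉ A) := by
    rw [Finset.filter_filter]
    apply Finset.filter_congr
    intro w _
    tauto
  rw [rk, hset]
  set S := x.filter (fun w => w < v ∧ rk x w ∉ A) with hS
  have hSx : S ⊆ x := Finset.filter_subset _ _
  have himg : S.image (rk x) = Finset.range (rk x v) \ A := by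
    ext r
    simp only [Finset.mem_image, Finset.mem_sdiff, Finset.mem_range]
    constructor
    · rintro ⟨w, hw, rfl⟩
      rw [hS, Finset.mem_filter] at hw
      exact ⟨rk_strict hw.1 hw.2.1, hw.2.2⟩
    · rintro ⟨hr, hrA⟩
      have hrn : r < x.card := lt_of_lt_of_le hr (Finset.card_le_card (Finset.filter_subset _ _))
      rcases rk_surj hrn with ⟨w, hw, rfl⟩
      refine ⟨w, ?_, rfl⟩
      rw [hS, Finset.mem_filter]
      refine ⟨hw, ?_, hrA⟩
      by_contra hwv
      exact absurd (rk_mono (not_lt.1 hwv)) (not_le.2 hr)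
  rw [← himg, Finset.card_image_of_injOn (rk_injOn.mono (by exact_mod_cast hSx))]

lemma card_dFace (A : Finset ℕ) (x : Finset V) :
    (dFace A x).card = (Finset.range x.card \ A).card := by
  rw [dFace_eq_filter]
  set S := x.filter (fun w => rk x w ∉ A) with hS
  have hSx : S ⊆ x := Finset.filter_subset _ _
  have himg : S.image (rk x) = Finset.range x.card \ A := by
    ext r
    simp only [Finset.mem_image, Finset.mem_sdiff, Finset.mem_range]
    constructor
    · rintro ⟨w, hw, rfl⟩
      rw [hS, Finset.mem_filter] at hw
      exact ⟨rk_lt_card hw.1, hw.2⟩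
    · rintro ⟨hr, hrA⟩
      rcases rk_surj hr with ⟨w, hw, rfl⟩
      exact ⟨w, Finset.mem_filter.2 ⟨hw, hrA⟩, rfl⟩
  rw [← himg, Finset.card_image_of_injOn (rk_injOn.mono (by exact_mod_cast hSx))]

lemma dFace_dFace (A B : Finset ℕ) (x : Finset V) :
    dFace B (dFace A x) =
      dFace (A ∪ (Finset.range x.card \ A).filter
        (fun r => (Finset.range r \ A).card ∈ B)) x := by
  rw [dFace_eq_filter B, dFace_eq_filter (A ∪ _)]
  ext v
  simp only [Finset.mem_filter]
  constructor
  · rintro ⟨hv1, hv2⟩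
    have hvx : v ∈ x := dFace_subset A x hv1
    rw [dFace_eq_filter, Finset.mem_filter] at hv1
    rw [rk_dFace hvx] at hv2
    refine ⟨hvx, ?_⟩
    intro hmem
    rcases Finset.mem_union.1 hmem with h | h
    · exact hv1.2 h
    · exact hv2 (Finset.mem_filter.1 h).2
  · rintro ⟨hvx, hv2⟩
    simp only [Finset.mem_union, Finset.mem_filter, Finset.mem_sdiff, Finset.mem_range,
      not_or, not_and] at hv2
    have hA : rk x v ∉ A := fun h => hv2.1 h
    refine ⟨?_, ?_⟩
    · rw [dFace_eq_filter, Finset.mem_filter]; exact ⟨hvx, hA⟩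
    · rw [rk_dFace hvx]
      exact hv2.2 ⟨rk_lt_card hvx, hA⟩ 

lemma cnt_strict {A : Finset ℕ} {s t : ℕ} (hs : s ∉ A) (h : s < t) :
    (Finset.range s \ A).card < (Finset.range t \ A).card := by
  apply Finset.card_lt_card
  constructor
  · intro u hu
    rw [Finset.mem_sdiff, Finset.mem_range] at *
    exact ⟨lt_trans hu.1 h, hu.2⟩
  · intro hsub
    have := hsub (Finset.mem_sdiff.2 ⟨Finset.mem_range.2 h, hs⟩)
    rw [Finset.mem_sdiff, Finset.mem_range] at this
    exact absurd this.1 (lt_irrefl s)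

lemma dFace_insert (A : Finset ℕ) (x : Finset V) {r : ℕ} (hr : r ∉ A) (hrn : r < x.card) :
    dFace {(Finset.range r \ A).card} (dFace A x) = dFace (insert r A) x := by
  rw [dFace_dFace]
  congr 1
  have hfilt : (Finset.range x.card \ A).filter
      (fun s => (Finset.range s \ A).card ∈ ({(Finset.range r \ A).card} : Finset ℕ)) = {r} := by
    ext s
    simp only [Finset.mem_filter, Finset.mem_sdiff, Finset.mem_range, Finset.mem_singleton]
    constructor
    · rintro ⟨⟨hsn, hsA⟩, heq⟩
      by_contra hne
      rcases lt_or_gt_of_ne hne with hlt | hgt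
      · exact absurd heq (Nat.ne_of_lt (cnt_strict hsA hlt))
      · exact absurd heq.symm (Nat.ne_of_lt (cnt_strict hr hgt))
    · rintro rfl
      exact ⟨⟨hrn, hr⟩, rfl⟩
  rw [hfilt, Finset.union_comm, ← Finset.insert_eq]

lemma dFace_empty (x : Finset V) : dFace ∅ x = x := by
  rw [dFace_eq_filter]
  simp

lemma dFace_range (x : Finset V) : dFace (Finset.range x.card) x = ∅ := by
  rw [dFace_eq_filter]
  apply Finset.filter_false_of_mem
  intro v hv
  exact not_not.2 (Finset.mem_range.2 (rk_lt_card hv))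

lemma addself {M : Type*} [AddCommMonoid M] [Module (ZMod 2) M] (a : M) : a + a = 0 := by
  have h2 : (2 : ZMod 2) = 0 := rfl
  calc a + a = (2 : ZMod 2) • a := by rw [two_smul]
  _ = (0 : ZMod 2) • a := by rw [h2]
  _ = 0 := zero_smul _ _

lemma addself_eq {M : Type*} [AddCommMonoid M] [Module (ZMod 2) M] {a b : M} (h : a = b) :
    a + b = 0 := by rw [h]; exact addself b

lemma bdMap_eC (y : Finset V) : bdMap V (eC y) = bdSimplex y := by
  unfold bdMap eC
  rw [Finsupp.lift_apply, Finsupp.sum_single_index (by simp), one_smul]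

lemma deltaMap_eC (i : ℤ) (y : Finset V) : deltaMap V i (eC y) = deltaSimplex i y := by
  unfold deltaMap eC
  rw [Finsupp.lift_apply, Finsupp.sum_single_index (by simp), one_smul]

lemma bd_dFace (x : Finset V) {A : Finset ℕ} (hA : A ⊆ Finset.range x.card)
    (h : A.card < x.card) :
    bdMap V (eC (dFace A x)) = (∑ r ∈ Finset.range x.card \ A, eC (dFace (insert r A) x))
      + (if A.card + 1 = x.card then eC (∅ : Finset V) else 0) := by
  set n := x.card with hn
  have hcardA : (Finset.range n \ A).card = n - A.card := by
    rw [Finset.card_sdiff_of_subset hA, Finset.card_range]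
  have hcard : (dFace A x).card = n - A.card := by rw [card_dFace, hcardA]
  have hinj : Set.InjOn (fun r => (Finset.range r \ A).card)
      (((Finset.range n \ A : Finset ℕ) : Set ℕ)) := by
    intro s hs t ht hst
    rw [Finset.mem_coe, Finset.mem_sdiff, Finset.mem_range] at hs ht
    by_contra hne
    rcases lt_or_gt_of_ne hne with hlt | hgt
    · exact absurd hst (Nat.ne_of_lt (cnt_strict hs.2 hlt))
    · exact absurd hst.symm (Nat.ne_of_lt (cnt_strict ht.2 hgt))
  have himg : (Finset.range n \ A).image (fun r => (Finset.range r \ A).card)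
      = Finset.range (n - A.card) := by
    rw [← hcardA]
    apply image_eq_range _ _ hinj
    intro s hs
    rw [Finset.mem_sdiff, Finset.mem_range] at hs
    apply Finset.card_lt_card
    constructor
    · intro u hu
      rw [Finset.mem_sdiff, Finset.mem_range] at *
      exact ⟨lt_trans hu.1 hs.1, hu.2⟩
    · intro hsub
      have := hsub (Finset.mem_sdiff.2 ⟨Finset.mem_range.2 hs.1, hs.2⟩)
      rw [Finset.mem_sdiff, Finset.mem_range] at this
      exact absurd this.1 (lt_irrefl s)
  rw [bdMap_eC]
  unfold bdSimplex
  by_cases h2 : 2 ≤ (dFace A x).card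
  · rw [if_pos h2, if_neg (by omega), add_zero, hcard, ← himg,
      Finset.sum_image (fun s hs t ht hst => hinj hs ht hst)]
    apply Finset.sum_congr rfl
    intro r hr
    rw [Finset.mem_sdiff, Finset.mem_range] at hr
    rw [dFace_insert A x hr.2 hr.1]
  · rw [if_neg h2]
    have hc1 : (dFace A x).card = 1 := by omega
    have hAn : A.card + 1 = n := by omega
    rw [if_pos hAn]
    have hcard1 : (Finset.range n \ A).card = 1 := by omega
    rcases Finset.card_eq_one.1 hcard1 with ⟨r, hrset⟩
    have hrmem : r ∈ Finset.range n \ A := by rw [hrset]; exact Finset.mem_singleton_self r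
    rw [Finset.mem_sdiff, Finset.mem_range] at hrmem
    have hins : insert r A = Finset.range n := by
      apply Finset.eq_of_subset_of_card_le
      · intro s hs
        rcases Finset.mem_insert.1 hs with rfl | hsA
        · exact Finset.mem_range.2 hrmem.1
        · exact hA hsA
      · rw [Finset.card_range, Finset.card_insert_of_notMem hrmem.2]
        omega
    rw [hrset, Finset.sum_singleton, hins, hn, dFace_range]
    exact (addself _).symm

-- ## pure ℕ combinatorics

lemma part0_subset (U : Finset ℕ) : part0 U ⊆ U := Finset.filter_subset _ _
lemma part1_subset (U : Finset ℕ) : part1 U ⊆ U := Finset.filter_subset _ _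

lemma mem_part0 {U : Finset ℕ} {u : ℕ} : u ∈ part0 U ↔ u ∈ U ∧ idxFun U u = 0 :=
  Finset.mem_filter
lemma mem_part1 {U : Finset ℕ} {u : ℕ} : u ∈ part1 U ↔ u ∈ U ∧ idxFun U u = 1 :=
  Finset.mem_filter

lemma idxFun_lt_two (U : Finset ℕ) (u : ℕ) : idxFun U u < 2 := Nat.mod_lt _ (by norm_num)

lemma part_dichotomy {U : Finset ℕ} {u : ℕ} (hu : u ∈ U) :
    (u ∈ part0 U ∧ u ∉ part1 U) ∨ (u ∉ part0 U ∧ u ∈ part1 U) := by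
  have hlt := idxFun_lt_two U u
  have : idxFun U u = 0 ∨ idxFun U u = 1 := by omega
  rcases this with h | h
  · exact Or.inl ⟨mem_part0.2 ⟨hu, h⟩, fun hc => by rw [(mem_part1.1 hc).2] at h; exact one_ne_zero h⟩
  · exact Or.inr ⟨fun hc => by rw [(mem_part0.1 hc).2] at h; exact one_ne_zero h.symm,
      mem_part1.2 ⟨hu, h⟩⟩

lemma part0_union_part1 (U : Finset ℕ) : part0 U ∪ part1 U = U := by
  ext u
  simp only [Finset.mem_union, mem_part0, mem_part1]
  constructor
  · rintro (h | h) <;> exact h.1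
  · intro hu
    rcases part_dichotomy hu with h | h
    · exact Or.inl (mem_part0.1 h.1)
    · exact Or.inr (mem_part1.1 h.2)

lemma part_disjoint (U : Finset ℕ) : Disjoint (part0 U) (part1 U) := by
  rw [Finset.disjoint_left]
  intro u h0 h1
  have := (mem_part0.1 h0).2
  rw [(mem_part1.1 h1).2] at this
  exact one_ne_zero this

lemma posIn_erase {W : Finset ℕ} {v u : ℕ} (hv : v ∈ W) (huv : u ≠ v) :
    posIn (W.erase v) u = posIn W u - (if v ≤ u then 1 else 0) := by
  unfold posIn
  rw [Finset.filter_erase]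
  by_cases h : v ≤ u
  · have hmem : v ∈ W.filter (fun z => z ≤ u) := Finset.mem_filter.2 ⟨hv, h⟩
    rw [if_pos h, Finset.card_erase_of_mem hmem]
  · have hnmem : v ∉ W.filter (fun z => z ≤ u) := fun hc => h (Finset.mem_filter.1 hc).2
    rw [if_neg h, Finset.erase_eq_of_notMem hnmem]
    simp

lemma posIn_pos {W : Finset ℕ} {v u : ℕ} (hv : v ∈ W) (h : v ≤ u) : 1 ≤ posIn W u := by
  have : v ∈ W.filter (fun z => z ≤ u) := Finset.mem_filter.2 ⟨hv, h⟩
  exact Finset.card_pos.2 ⟨v, this⟩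

lemma idxFun_erase_lt {W : Finset ℕ} {v u : ℕ} (hv : v ∈ W) (h : u < v) :
    idxFun (W.erase v) u = idxFun W u := by
  unfold idxFun
  rw [posIn_erase hv (Nat.ne_of_lt h), if_neg (by omega)]
  omega

lemma idxFun_erase_gt {W : Finset ℕ} {v u : ℕ} (hv : v ∈ W) (h : v < u) :
    idxFun (W.erase v) u = 1 - idxFun W u := by
  unfold idxFun
  rw [posIn_erase hv (Nat.ne_of_gt h), if_pos (le_of_lt h)]
  have h1 : 1 ≤ posIn W u := posIn_pos hv (le_of_lt h)
  omega

lemma part0_erase {W : Finset ℕ} {v : ℕ} (hv : v ∈ W) :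
    part0 (W.erase v) = (part0 W).filter (· < v) ∪ (part1 W).filter (fun u => v < u) := by
  ext u
  simp only [Finset.mem_union, Finset.mem_filter, mem_part0, mem_part1, Finset.mem_erase]
  constructor
  · rintro ⟨⟨huv, huW⟩, hidx⟩
    rcases Nat.lt_or_ge u v with hlt | hge
    · left
      rw [idxFun_erase_lt hv hlt] at hidx
      exact ⟨⟨huW, hidx⟩, hlt⟩
    · have hgt : v < u := lt_of_le_of_ne hge (Ne.symm huv)
      right
      rw [idxFun_erase_gt hv hgt] at hidx
      have := idxFun_lt_two W u
      exact ⟨⟨huW, by omega⟩, hgt⟩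
  · rintro (⟨⟨huW, hidx⟩, hlt⟩ | ⟨⟨huW, hidx⟩, hgt⟩)
    · exact ⟨⟨by omega, huW⟩, by rw [idxFun_erase_lt hv hlt]; exact hidx⟩
    · exact ⟨⟨by omega, huW⟩, by rw [idxFun_erase_gt hv hgt, hidx]⟩

lemma part1_erase {W : Finset ℕ} {v : ℕ} (hv : v ∈ W) :
    part1 (W.erase v) = (part1 W).filter (· < v) ∪ (part0 W).filter (fun u => v < u) := by
  ext u
  simp only [Finset.mem_union, Finset.mem_filter, mem_part0, mem_part1, Finset.mem_erase]
  constructor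
  · rintro ⟨⟨huv, huW⟩, hidx⟩
    rcases Nat.lt_or_ge u v with hlt | hge
    · left
      rw [idxFun_erase_lt hv hlt] at hidx
      exact ⟨⟨huW, hidx⟩, hlt⟩
    · have hgt : v < u := lt_of_le_of_ne hge (Ne.symm huv)
      right
      rw [idxFun_erase_gt hv hgt] at hidx
      have := idxFun_lt_two W u
      exact ⟨⟨huW, by omega⟩, hgt⟩
  · rintro (⟨⟨huW, hidx⟩, hlt⟩ | ⟨⟨huW, hidx⟩, hgt⟩)
    · exact ⟨⟨by omega, huW⟩, by rw [idxFun_erase_lt hv hlt]; exact hidx⟩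
    · exact ⟨⟨by omega, huW⟩, by rw [idxFun_erase_gt hv hgt, hidx]⟩

/-- threshold cut sets -/
def cut0 (W : Finset ℕ) (t : ℕ) : Finset ℕ :=
  (part0 W).filter (· < t) ∪ (part1 W).filter (fun u => t ≤ u)
def cut1 (W : Finset ℕ) (t : ℕ) : Finset ℕ :=
  (part1 W).filter (· < t) ∪ (part0 W).filter (fun u => t ≤ u)

lemma mem_cut0 {W : Finset ℕ} {t u : ℕ} :
    u ∈ cut0 W t ↔ (u ∈ part0 W ∧ u < t) ∨ (u ∈ part1 W ∧ t ≤ u) := by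
  unfold cut0; simp [Finset.mem_union, Finset.mem_filter]
lemma mem_cut1 {W : Finset ℕ} {t u : ℕ} :
    u ∈ cut1 W t ↔ (u ∈ part1 W ∧ u < t) ∨ (u ∈ part0 W ∧ t ≤ u) := by
  unfold cut1; simp [Finset.mem_union, Finset.mem_filter]

lemma cut0_zero (W : Finset ℕ) : cut0 W 0 = part1 W := by
  ext u; rw [mem_cut0]; constructor
  · rintro (⟨_, h⟩ | ⟨h, _⟩); · omega
    exact h
  · intro h; exact Or.inr ⟨h, Nat.zero_le u⟩
lemma cut1_zero (W : Finset ℕ) : cut1 W 0 = part0 W := by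
  ext u; rw [mem_cut1]; constructor
  · rintro (⟨_, h⟩ | ⟨h, _⟩); · omega
    exact h
  · intro h; exact Or.inr ⟨h, Nat.zero_le u⟩

lemma cut0_top {W : Finset ℕ} {N : ℕ} (h : ∀ u ∈ W, u < N) : cut0 W N = part0 W := by
  ext u; rw [mem_cut0]; constructor
  · rintro (⟨h1, _⟩ | ⟨h1, h2⟩); · exact h1
    exact absurd (h u (part1_subset W h1)) (by omega)
  · intro hu; exact Or.inl ⟨hu, h u (part0_subset W hu)⟩
lemma cut1_top {W : Finset ℕ} {N : ℕ} (h : ∀ u ∈ W, u < N) : cut1 W N = part1 W := by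
  ext u; rw [mem_cut1]; constructor
  · rintro (⟨h1, _⟩ | ⟨h1, h2⟩); · exact h1
    exact absurd (h u (part0_subset W h1)) (by omega)
  · intro hu; exact Or.inl ⟨hu, h u (part1_subset W hu)⟩

lemma cut0_step {W : Finset ℕ} {t : ℕ} (ht : t ∉ W) : cut0 W t = cut0 W (t+1) := by
  ext u
  rw [mem_cut0, mem_cut0]
  have h0 : u ∈ part0 W → u ≠ t := fun h => fun hc => ht (by rw [← hc]; exact part0_subset W h)
  have h1 : u ∈ part1 W → u ≠ t := fun h => fun hc => ht (by rw [← hc]; exact part1_subset W h)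
  constructor
  · rintro (⟨h, hu⟩ | ⟨h, hu⟩)
    · exact Or.inl ⟨h, by omega⟩
    · exact Or.inr ⟨h, by have := h1 h; omega⟩
  · rintro (⟨h, hu⟩ | ⟨h, hu⟩)
    · exact Or.inl ⟨h, by have := h0 h; omega⟩
    · exact Or.inr ⟨h, by omega⟩
lemma cut1_step {W : Finset ℕ} {t : ℕ} (ht : t ∉ W) : cut1 W t = cut1 W (t+1) := by
  ext u
  rw [mem_cut1, mem_cut1]
  have h0 : u ∈ part0 W → u ≠ t := fun h => fun hc => ht (by rw [← hc]; exact part0_subset W h)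
  have h1 : u ∈ part1 W → u ≠ t := fun h => fun hc => ht (by rw [← hc]; exact part1_subset W h)
  constructor
  · rintro (⟨h, hu⟩ | ⟨h, hu⟩)
    · exact Or.inl ⟨h, by omega⟩
    · exact Or.inr ⟨h, by have := h0 h; omega⟩
  · rintro (⟨h, hu⟩ | ⟨h, hu⟩)
    · exact Or.inl ⟨h, by have := h1 h; omega⟩
    · exact Or.inr ⟨h, by omega⟩

section CutIdent
variable {W : Finset ℕ} {v : ℕ}

lemma cut_ins0_of0 (hv : v ∈ part0 W) :
    insert v (part0 (W.erase v)) = cut0 W (v+1) := by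
  have hvW : v ∈ W := part0_subset W hv
  rw [part0_erase hvW]
  ext u
  simp only [Finset.mem_insert, Finset.mem_union, Finset.mem_filter, mem_cut0]
  constructor
  · rintro (rfl | ⟨h, hlt⟩ | ⟨h, hgt⟩)
    · exact Or.inl ⟨hv, by omega⟩
    · exact Or.inl ⟨h, by omega⟩
    · exact Or.inr ⟨h, by omega⟩
  · rintro (⟨h, hlt⟩ | ⟨h, hge⟩)
    · by_cases huv : u = v
      · exact Or.inl huv
      · exact Or.inr (Or.inl ⟨h, by omega⟩)
    · exact Or.inr (Or.inr ⟨h, by omega⟩)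

lemma cut_ins0_of1 (hv : v ∈ part1 W) :
    insert v (part0 (W.erase v)) = cut0 W v := by
  have hvW : v ∈ W := part1_subset W hv
  have hn0 : v ∉ part0 W := Finset.disjoint_right.1 (part_disjoint W) hv
  rw [part0_erase hvW]
  ext u
  simp only [Finset.mem_insert, Finset.mem_union, Finset.mem_filter, mem_cut0]
  constructor
  · rintro (rfl | ⟨h, hlt⟩ | ⟨h, hgt⟩)
    · exact Or.inr ⟨hv, le_refl _⟩
    · exact Or.inl ⟨h, hlt⟩
    · exact Or.inr ⟨h, by omega⟩
  · rintro (⟨h, hlt⟩ | ⟨h, hge⟩)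
    · exact Or.inr (Or.inl ⟨h, hlt⟩)
    · by_cases huv : u = v
      · exact Or.inl huv
      · exact Or.inr (Or.inr ⟨h, by omega⟩)

lemma cut_nin0_of0 (hv : v ∈ part0 W) :
    part0 (W.erase v) = cut0 W v := by
  have hvW : v ∈ W := part0_subset W hv
  have hn1 : v ∉ part1 W := Finset.disjoint_left.1 (part_disjoint W) hv
  rw [part0_erase hvW]
  ext u
  simp only [Finset.mem_union, Finset.mem_filter, mem_cut0]
  constructor
  · rintro (⟨h, hlt⟩ | ⟨h, hgt⟩)
    · exact Or.inl ⟨h, hlt⟩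
    · exact Or.inr ⟨h, by omega⟩
  · rintro (⟨h, hlt⟩ | ⟨h, hge⟩)
    · exact Or.inl ⟨h, hlt⟩
    · have huv : u ≠ v := fun hc => hn1 (hc ▸ h)
      exact Or.inr ⟨h, by omega⟩

lemma cut_nin0_of1 (hv : v ∈ part1 W) :
    part0 (W.erase v) = cut0 W (v+1) := by
  have hvW : v ∈ W := part1_subset W hv
  have hn0 : v ∉ part0 W := Finset.disjoint_right.1 (part_disjoint W) hv
  rw [part0_erase hvW]
  ext u
  simp only [Finset.mem_union, Finset.mem_filter, mem_cut0]
  constructor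
  · rintro (⟨h, hlt⟩ | ⟨h, hgt⟩)
    · exact Or.inl ⟨h, by omega⟩
    · exact Or.inr ⟨h, by omega⟩
  · rintro (⟨h, hlt⟩ | ⟨h, hge⟩)
    · have huv : u ≠ v := fun hc => hn0 (hc ▸ h)
      exact Or.inl ⟨h, by omega⟩
    · exact Or.inr ⟨h, by omega⟩

lemma cut_ins1_of1 (hv : v ∈ part1 W) :
    insert v (part1 (W.erase v)) = cut1 W (v+1) := by
  have hvW : v ∈ W := part1_subset W hv
  rw [part1_erase hvW]
  ext u
  simp only [Finset.mem_insert, Finset.mem_union, Finset.mem_filter, mem_cut1]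
  constructor
  · rintro (rfl | ⟨h, hlt⟩ | ⟨h, hgt⟩)
    · exact Or.inl ⟨hv, by omega⟩
    · exact Or.inl ⟨h, by omega⟩
    · exact Or.inr ⟨h, by omega⟩
  · rintro (⟨h, hlt⟩ | ⟨h, hge⟩)
    · by_cases huv : u = v
      · exact Or.inl huv
      · exact Or.inr (Or.inl ⟨h, by omega⟩)
    · exact Or.inr (Or.inr ⟨h, by omega⟩)

lemma cut_ins1_of0 (hv : v ∈ part0 W) :
    insert v (part1 (W.erase v)) = cut1 W v := by
  have hvW : v ∈ W := part0_subset W hv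
  rw [part1_erase hvW]
  ext u
  simp only [Finset.mem_insert, Finset.mem_union, Finset.mem_filter, mem_cut1]
  constructor
  · rintro (rfl | ⟨h, hlt⟩ | ⟨h, hgt⟩)
    · exact Or.inr ⟨hv, le_refl _⟩
    · exact Or.inl ⟨h, hlt⟩
    · exact Or.inr ⟨h, by omega⟩
  · rintro (⟨h, hlt⟩ | ⟨h, hge⟩)
    · exact Or.inr (Or.inl ⟨h, hlt⟩)
    · by_cases huv : u = v
      · exact Or.inl huv
      · exact Or.inr (Or.inr ⟨h, by omega⟩)

lemma cut_nin1_of1 (hv : v ∈ part1 W) :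
    part1 (W.erase v) = cut1 W v := by
  have hvW : v ∈ W := part1_subset W hv
  have hn0 : v ∉ part0 W := Finset.disjoint_right.1 (part_disjoint W) hv
  rw [part1_erase hvW]
  ext u
  simp only [Finset.mem_union, Finset.mem_filter, mem_cut1]
  constructor
  · rintro (⟨h, hlt⟩ | ⟨h, hgt⟩)
    · exact Or.inl ⟨h, hlt⟩
    · exact Or.inr ⟨h, by omega⟩
  · rintro (⟨h, hlt⟩ | ⟨h, hge⟩)
    · exact Or.inl ⟨h, hlt⟩
    · have huv : u ≠ v := fun hc => hn0 (hc ▸ h)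
      exact Or.inr ⟨h, by omega⟩

lemma cut_nin1_of0 (hv : v ∈ part0 W) :
    part1 (W.erase v) = cut1 W (v+1) := by
  have hvW : v ∈ W := part0_subset W hv
  have hn1 : v ∉ part1 W := Finset.disjoint_left.1 (part_disjoint W) hv
  rw [part1_erase hvW]
  ext u
  simp only [Finset.mem_union, Finset.mem_filter, mem_cut1]
  constructor
  · rintro (⟨h, hlt⟩ | ⟨h, hgt⟩)
    · exact Or.inl ⟨h, by omega⟩
    · exact Or.inr ⟨h, by omega⟩
  · rintro (⟨h, hlt⟩ | ⟨h, hge⟩)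
    · have huv : u ≠ v := fun hc => hn1 (hc ▸ h)
      exact Or.inl ⟨h, by omega⟩
    · exact Or.inr ⟨h, by omega⟩

end CutIdent

-- ## shift machinery

def shiftk (k a : ℕ) : ℕ := if a < k then a else a + 1
def unshiftk (k a : ℕ) : ℕ := if a < k then a else a - 1

lemma shiftk_ne (k a : ℕ) : shiftk k a ≠ k := by unfold shiftk; split <;> omega

lemma shiftk_strictMono (k : ℕ) {a b : ℕ} (h : a < b) : shiftk k a < shiftk k b := by
  unfold shiftk; split <;> split <;> omega

lemma shiftk_inj (k : ℕ) : Function.Injective (shiftk k) := by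
  intro a b h
  by_contra hne
  rcases lt_or_gt_of_ne hne with hlt | hgt
  · exact absurd h (Nat.ne_of_lt (shiftk_strictMono k hlt))
  · exact absurd h.symm (Nat.ne_of_lt (shiftk_strictMono k hgt))

lemma unshiftk_shiftk (k a : ℕ) : unshiftk k (shiftk k a) = a := by
  unfold shiftk unshiftk
  rcases Nat.lt_or_ge a k with h | h
  · rw [if_pos h, if_pos h]
  · rw [if_neg (by omega : ¬ a < k), if_neg (by omega : ¬ a + 1 < k)]
    omega

lemma shiftk_unshiftk {k b : ℕ} (h : b ≠ k) : shiftk k (unshiftk k b) = b := by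
  unfold shiftk unshiftk
  rcases Nat.lt_or_ge b k with hb | hb
  · rw [if_pos hb, if_pos hb]
  · rw [if_neg (by omega : ¬ b < k), if_neg (by omega : ¬ b - 1 < k)]
    omega

lemma shiftk_le_iff (k : ℕ) {a b : ℕ} : shiftk k a ≤ shiftk k b ↔ a ≤ b := by
  unfold shiftk; split <;> split <;> omega

lemma posIn_shift (U' : Finset ℕ) (k a : ℕ) :
    posIn (insert k (U'.image (shiftk k))) (shiftk k a)
      = posIn U' a + (if k ≤ shiftk k a then 1 else 0) := by
  unfold posIn
  rw [Finset.filter_insert]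
  have himg : (U'.image (shiftk k)).filter (fun z => z ≤ shiftk k a)
      = (U'.filter (fun z => z ≤ a)).image (shiftk k) := by
    ext b
    simp only [Finset.mem_filter, Finset.mem_image]
    constructor
    · rintro ⟨⟨c, hc, rfl⟩, hle⟩
      exact ⟨c, ⟨hc, (shiftk_le_iff k).1 hle⟩, rfl⟩
    · rintro ⟨c, ⟨hc, hle⟩, rfl⟩
      exact ⟨⟨c, hc, rfl⟩, (shiftk_le_iff k).2 hle⟩
  have hknotin : k ∉ (U'.image (shiftk k)).filter (fun z => z ≤ shiftk k a) := by
    intro hc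
    rcases Finset.mem_image.1 (Finset.mem_filter.1 hc).1 with ⟨c, _, hcc⟩
    exact shiftk_ne k c hcc
  by_cases hk : k ≤ shiftk k a
  · rw [if_pos hk, if_pos hk, Finset.card_insert_of_notMem hknotin, himg,
      Finset.card_image_of_injective _ (shiftk_inj k)]
  · rw [if_neg hk, if_neg hk, himg, Finset.card_image_of_injective _ (shiftk_inj k), add_zero]

lemma idxFun_shift (U' : Finset ℕ) (k a : ℕ) :
    idxFun (insert k (U'.image (shiftk k))) (shiftk k a) = idxFun U' a := by
  unfold idxFun
  rw [posIn_shift]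
  unfold shiftk
  split <;> rename_i h
  · rw [if_neg (by omega)]
    omega
  · rw [if_pos (by omega)]
    omega

lemma part0_shift (U' : Finset ℕ) (k : ℕ) :
    (part0 (insert k (U'.image (shiftk k)))).erase k = (part0 U').image (shiftk k) := by
  ext b
  simp only [Finset.mem_erase, mem_part0, Finset.mem_insert, Finset.mem_image]
  constructor
  · rintro ⟨hbk, (rfl | ⟨a, ha, rfl⟩), hidx⟩
    · exact absurd rfl hbk
    · refine ⟨a, ⟨ha, ?_⟩, rfl⟩
      rw [← idxFun_shift U' k a]
      exact hidx
  · rintro ⟨a, ⟨haU, haidx⟩, rfl⟩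
    exact ⟨shiftk_ne k a, Or.inr ⟨a, haU, rfl⟩, by rw [idxFun_shift U' k a]; exact haidx⟩

lemma part1_shift (U' : Finset ℕ) (k : ℕ) :
    (part1 (insert k (U'.image (shiftk k)))).erase k = (part1 U').image (shiftk k) := by
  ext b
  simp only [Finset.mem_erase, mem_part1, Finset.mem_insert, Finset.mem_image]
  constructor
  · rintro ⟨hbk, (rfl | ⟨a, ha, rfl⟩), hidx⟩
    · exact absurd rfl hbk
    · refine ⟨a, ⟨ha, ?_⟩, rfl⟩
      rw [← idxFun_shift U' k a]
      exact hidx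
  · rintro ⟨a, ⟨haU, haidx⟩, rfl⟩
    exact ⟨shiftk_ne k a, Or.inr ⟨a, haU, rfl⟩, by rw [idxFun_shift U' k a]; exact haidx⟩


-- ## sum reindexing lemmas

lemma sum_shift_reindex {M : Type*} [AddCommMonoid M] (n c : ℕ) (g : Finset ℕ → ℕ → M) :
    ∑ k ∈ Finset.range n, ∑ U' ∈ Finset.powersetCard c (Finset.range (n-1)),
        g (insert k (U'.image (shiftk k))) k
      = ∑ U ∈ Finset.powersetCard (c+1) (Finset.range n), ∑ k ∈ U, g U k := by
  rw [Finset.sum_sigma', Finset.sum_sigma']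
  refine Finset.sum_nbij'
    (fun p => (⟨insert p.1 (p.2.image (shiftk p.1)), p.1⟩ : Σ _ : Finset ℕ, ℕ))
    (fun q => (⟨q.2, (q.1.erase q.2).image (unshiftk q.2)⟩ : Σ _ : ℕ, Finset ℕ))
    ?_ ?_ ?_ ?_ ?_
  · rintro ⟨k, U'⟩ hp
    dsimp only at hp ⊢
    rw [Finset.mem_sigma, Finset.mem_range, Finset.mem_powersetCard] at hp
    have hk := hp.1
    have hU'sub := hp.2.1
    have hU'card := hp.2.2
    rw [Finset.mem_sigma, Finset.mem_powersetCard]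
    have hknotin : k ∉ U'.image (shiftk k) := by
      intro hc
      rcases Finset.mem_image.1 hc with ⟨a, _, hak⟩
      exact shiftk_ne k a hak
    refine ⟨⟨?_, ?_⟩, Finset.mem_insert_self _ _⟩
    · intro b hb
      rcases Finset.mem_insert.1 hb with rfl | hb
      · exact Finset.mem_range.2 hk
      · rcases Finset.mem_image.1 hb with ⟨a, ha, rfl⟩
        have := Finset.mem_range.1 (hU'sub ha)
        rw [Finset.mem_range]
        unfold shiftk
        split <;> omega
    · rw [Finset.card_insert_of_notMem hknotin,
        Finset.card_image_of_injective _ (shiftk_inj k), hU'card]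
  · rintro ⟨U, k⟩ hq
    dsimp only at hq ⊢
    rw [Finset.mem_sigma, Finset.mem_powersetCard] at hq
    have hUsub := hq.1.1
    have hUcard := hq.1.2
    have hk := hq.2
    rw [Finset.mem_sigma, Finset.mem_range, Finset.mem_powersetCard]
    have hkn : k < n := Finset.mem_range.1 (hUsub hk)
    refine ⟨hkn, ?_, ?_⟩
    · intro b hb
      rcases Finset.mem_image.1 hb with ⟨a, ha, rfl⟩
      rcases Finset.mem_erase.1 ha with ⟨hak, haU⟩
      have := Finset.mem_range.1 (hUsub haU)
      rw [Finset.mem_range]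
      unfold unshiftk
      split <;> omega
    · have hinj : Set.InjOn (unshiftk k) ((U.erase k : Finset ℕ) : Set ℕ) := by
        intro a ha b hb h
        rw [Finset.mem_coe, Finset.mem_erase] at ha hb
        rw [← shiftk_unshiftk ha.1, h, shiftk_unshiftk hb.1]
      rw [Finset.card_image_of_injOn hinj, Finset.card_erase_of_mem hk, hUcard]
      rfl
  · rintro ⟨k, U'⟩ hp
    rw [Finset.mem_sigma, Finset.mem_range, Finset.mem_powersetCard] at hp
    have hknotin : k ∉ U'.image (shiftk k) := by
      intro hc
      rcases Finset.mem_image.1 hc with ⟨a, _, hak⟩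
      exact shiftk_ne k a hak
    have hX : (((insert k (U'.image (shiftk k))).erase k).image (unshiftk k)) = U' := by
      rw [Finset.erase_insert hknotin, Finset.image_image]
      calc U'.image (unshiftk k ∘ shiftk k) = U'.image id := by
            apply Finset.image_congr
            intro a _
            exact unshiftk_shiftk k a
      _ = U' := Finset.image_id
    show (⟨k, ((insert k (U'.image (shiftk k))).erase k).image (unshiftk k)⟩ : Σ _ : ℕ, Finset ℕ)
      = ⟨k, U'⟩
    rw [hX]
  · rintro ⟨U, k⟩ hq
    dsimp only at hq ⊢
    rw [Finset.mem_sigma, Finset.mem_powersetCard] at hq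
    have hUsub := hq.1.1
    have hUcard := hq.1.2
    have hk := hq.2
    have hX : insert k (((U.erase k).image (unshiftk k)).image (shiftk k)) = U := by
      rw [Finset.image_image]
      have h2 : (U.erase k).image (shiftk k ∘ unshiftk k) = (U.erase k).image id := by
        apply Finset.image_congr
        intro a ha
        rw [Finset.mem_coe, Finset.mem_erase] at ha
        exact shiftk_unshiftk ha.1
      rw [h2, Finset.image_id, Finset.insert_erase hk]
    show (⟨insert k (((U.erase k).image (unshiftk k)).image (shiftk k)), k⟩ : Σ _ : Finset ℕ, ℕ)
      = ⟨U, k⟩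
    rw [hX]
  · rintro ⟨k, U'⟩ _
    rfl

lemma sum_insert_erase {M : Type*} [AddCommMonoid M] (n c : ℕ) (g : Finset ℕ → ℕ → M) :
    ∑ U ∈ Finset.powersetCard c (Finset.range n), ∑ v ∈ Finset.range n \ U, g U v
      = ∑ W ∈ Finset.powersetCard (c+1) (Finset.range n), ∑ v ∈ W, g (W.erase v) v := by
  rw [Finset.sum_sigma', Finset.sum_sigma']
  refine Finset.sum_nbij'
    (fun p => (⟨insert p.2 p.1, p.2⟩ : Σ _ : Finset ℕ, ℕ))
    (fun q => (⟨q.1.erase q.2, q.2⟩ : Σ _ : Finset ℕ, ℕ))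
    ?_ ?_ ?_ ?_ ?_
  · rintro ⟨U, v⟩ hp
    rw [Finset.mem_sigma, Finset.mem_powersetCard] at hp
    have hUsub := hp.1.1
    have hUcard := hp.1.2
    have hv := hp.2
    rw [Finset.mem_sdiff] at hv
    rw [Finset.mem_sigma, Finset.mem_powersetCard]
    exact ⟨⟨Finset.insert_subset hv.1 hUsub,
      by rw [Finset.card_insert_of_notMem hv.2, hUcard]⟩, Finset.mem_insert_self _ _⟩
  · rintro ⟨W, v⟩ hq
    rw [Finset.mem_sigma, Finset.mem_powersetCard] at hq
    have hWsub := hq.1.1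
    have hWcard := hq.1.2
    have hv := hq.2
    rw [Finset.mem_sigma, Finset.mem_powersetCard]
    refine ⟨⟨(Finset.erase_subset _ _).trans hWsub, ?_⟩, ?_⟩
    · rw [Finset.card_erase_of_mem hv, hWcard]
      rfl
    · rw [Finset.mem_sdiff]
      exact ⟨hWsub hv, Finset.notMem_erase _ _⟩
  · rintro ⟨U, v⟩ hp
    rw [Finset.mem_sigma, Finset.mem_powersetCard] at hp
    have hv := hp.2
    rw [Finset.mem_sdiff] at hv
    show (⟨(insert v U).erase v, v⟩ : Σ _ : Finset ℕ, ℕ) = ⟨U, v⟩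
    rw [Finset.erase_insert hv.2]
  · rintro ⟨W, v⟩ hq
    rw [Finset.mem_sigma] at hq
    show (⟨insert v (W.erase v), v⟩ : Σ _ : Finset ℕ, ℕ) = ⟨W, v⟩
    rw [Finset.insert_erase hq.2]
  · rintro ⟨U, v⟩ hp
    rw [Finset.mem_sigma, Finset.mem_powersetCard] at hp
    have hv := hp.2
    rw [Finset.mem_sdiff] at hv
    show g U v = g ((insert v U).erase v) v
    rw [Finset.erase_insert hv.2]

-- ## telescoping

lemma tele {M : Type*} [AddCommMonoid M] [Module (ZMod 2) M] (F : ℕ → M) (N : ℕ) :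
    ∑ t ∈ Finset.range N, (F t + F (t+1)) = F 0 + F N := by
  induction N with
  | zero => rw [Finset.range_zero, Finset.sum_empty, addself]
  | succ N IH =>
    rw [Finset.sum_range_succ, IH]
    have : F 0 + F N + (F N + F (N+1)) = F 0 + ((F N + F N) + F (N+1)) := by abel
    rw [this, addself, zero_add]

lemma tele_W {M : Type*} [AddCommMonoid M] [Module (ZMod 2) M] (F : ℕ → M) {W : Finset ℕ}
    {n : ℕ} (hW : W ⊆ Finset.range n) (h : ∀ t, t < n → t ∉ W → F t = F (t+1)) :
    ∑ v ∈ W, (F v + F (v+1)) = F 0 + F n := by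
  rw [← tele F n]
  apply Finset.sum_subset hW
  intro t ht htW
  exact addself_eq (h t (Finset.mem_range.1 ht) htW)

-- ## small set identities

lemma insert_erase' (a : ℕ) (s : Finset ℕ) : insert a (s.erase a) = insert a s := by
  ext b
  simp only [Finset.mem_insert, Finset.mem_erase]
  constructor
  · rintro (rfl | ⟨_, h⟩)
    · exact Or.inl rfl
    · exact Or.inr h
  · rintro (rfl | h)
    · exact Or.inl rfl
    · by_cases hb : b = a
      · exact Or.inl hb
      · exact Or.inr ⟨hb, h⟩

lemma sdiff_part0 (U : Finset ℕ) : U \ part0 U = part1 U := by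
  ext u
  simp only [Finset.mem_sdiff]
  constructor
  · rintro ⟨hu, h0⟩
    rcases part_dichotomy hu with h | h
    · exact absurd h.1 h0
    · exact h.2
  · intro h
    exact ⟨part1_subset U h, Finset.disjoint_right.1 (part_disjoint U) h⟩

lemma sdiff_part1 (U : Finset ℕ) : U \ part1 U = part0 U := by
  ext u
  simp only [Finset.mem_sdiff]
  constructor
  · rintro ⟨hu, h1⟩
    rcases part_dichotomy hu with h | h
    · exact h.1
    · exact absurd h.2 h1
  · intro h
    exact ⟨part0_subset U h, Finset.disjoint_left.1 (part_disjoint U) h⟩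

lemma part0_empty : part0 (∅ : Finset ℕ) = ∅ :=
  Finset.subset_empty.1 (part0_subset ∅)
lemma part1_empty : part1 (∅ : Finset ℕ) = ∅ :=
  Finset.subset_empty.1 (part1_subset ∅)

lemma posIn_range {n u : ℕ} (h : u < n) : posIn (Finset.range n) u = u + 1 := by
  unfold posIn
  have : (Finset.range n).filter (fun z => z ≤ u) = Finset.range (u + 1) := by
    ext a
    simp only [Finset.mem_filter, Finset.mem_range]
    omega
  rw [this, Finset.card_range]

lemma part1_range (n : ℕ) : part1 (Finset.range n) = Finset.range n := by
  apply Finset.Subset.antisymm (part1_subset _)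
  intro u hu
  rw [mem_part1]
  refine ⟨hu, ?_⟩
  unfold idxFun
  rw [posIn_range (Finset.mem_range.1 hu)]
  omega

lemma part0_range (n : ℕ) : part0 (Finset.range n) = ∅ := by
  rw [← sdiff_part1, part1_range, Finset.sdiff_self]

lemma posIn_erase0 {n u : ℕ} (hn : u < n) (hu : u ≠ 0) :
    posIn ((Finset.range n).erase 0) u = u := by
  unfold posIn
  have : ((Finset.range n).erase 0).filter (fun z => z ≤ u) = (Finset.range (u+1)).erase 0 := by
    ext a
    simp only [Finset.mem_filter, Finset.mem_erase, Finset.mem_range]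
    omega
  rw [this, Finset.card_erase_of_mem (by simp), Finset.card_range]
  omega

lemma part0_erase0 (n : ℕ) : part0 ((Finset.range n).erase 0) = (Finset.range n).erase 0 := by
  apply Finset.Subset.antisymm (part0_subset _)
  intro u hu
  rw [Finset.mem_erase, Finset.mem_range] at hu
  rw [mem_part0]
  refine ⟨by rw [Finset.mem_erase, Finset.mem_range]; exact hu, ?_⟩
  unfold idxFun
  rw [posIn_erase0 hu.2 hu.1]
  omega

lemma part0_eq_self_unique {n : ℕ} {U : Finset ℕ} (hU : U ⊆ Finset.range n)
    (hcard : U.card = n - 1) (hn : 1 ≤ n) (h : part0 U = U) :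
    U = (Finset.range n).erase 0 := by
  have hcompl : (Finset.range n \ U).card = 1 := by
    rw [Finset.card_sdiff_of_subset hU, Finset.card_range]
    omega
  rcases Finset.card_eq_one.1 hcompl with ⟨t, ht⟩
  have h0 : t = 0 := by
    by_contra ht0
    have h0U : 0 ∈ U := by
      by_contra h0U
      have : (0 : ℕ) ∈ Finset.range n \ U :=
        Finset.mem_sdiff.2 ⟨Finset.mem_range.2 (by omega), h0U⟩
      rw [ht, Finset.mem_singleton] at this
      exact ht0 this.symm
    have h0p : (0 : ℕ) ∈ part0 U := by rw [h]; exact h0U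
    have : idxFun U 0 = 0 := (mem_part0.1 h0p).2
    unfold idxFun posIn at this
    have hfil : U.filter (fun z => z ≤ 0) = {0} := by
      ext a
      simp only [Finset.mem_filter, Finset.mem_singleton]
      constructor
      · rintro ⟨ha, ha0⟩
        omega
      · rintro rfl
        exact ⟨h0U, le_refl 0⟩
    rw [hfil] at this
    simp at this
  have : U = Finset.range n \ {t} := by
    rw [← ht]
    exact (Finset.sdiff_sdiff_eq_self hU).symm
  rw [this, h0, ← Finset.erase_eq]

lemma posIn_all_le {U : Finset ℕ} {u : ℕ} (h : ∀ z ∈ U, z ≤ u) : posIn U u = U.card := by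
  unfold posIn
  congr 1
  apply Finset.filter_true_of_mem
  exact h

lemma part1_eq_self_unique {n : ℕ} {U : Finset ℕ} (hU : U ⊆ Finset.range n)
    (hcard : U.card = n - 1) (hn : 1 ≤ n) (h : part1 U = U) :
    U = Finset.range (n - 1) := by
  have hcompl : (Finset.range n \ U).card = 1 := by
    rw [Finset.card_sdiff_of_subset hU, Finset.card_range]
    omega
  rcases Finset.card_eq_one.1 hcompl with ⟨t, ht⟩
  have htn : t < n := by
    have : t ∈ Finset.range n \ U := by rw [ht]; exact Finset.mem_singleton_self t
    exact Finset.mem_range.1 (Finset.mem_sdiff.1 this).1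
  have h0 : t = n - 1 := by
    by_contra ht0
    have hmU : n - 1 ∈ U := by
      by_contra hmU
      have : n - 1 ∈ Finset.range n \ U :=
        Finset.mem_sdiff.2 ⟨Finset.mem_range.2 (by omega), hmU⟩
      rw [ht, Finset.mem_singleton] at this
      exact ht0 this.symm
    have hmp : n - 1 ∈ part1 U := by rw [h]; exact hmU
    have hidx : idxFun U (n-1) = 1 := (mem_part1.1 hmp).2
    unfold idxFun at hidx
    rw [posIn_all_le (fun z hz => by have := Finset.mem_range.1 (hU hz); omega), hcard] at hidx
    omega
  have : U = Finset.range n \ {t} := by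
    rw [← ht]
    exact (Finset.sdiff_sdiff_eq_self hU).symm
  rw [this, h0]
  ext a
  simp only [Finset.mem_sdiff, Finset.mem_range, Finset.mem_singleton]
  omega

lemma part1_of_part0_self {U : Finset ℕ} (h : part0 U = U) : part1 U = ∅ := by
  rw [← sdiff_part0, h, Finset.sdiff_self]
lemma part0_of_part1_self {U : Finset ℕ} (h : part1 U = U) : part0 U = ∅ := by
  rw [← sdiff_part1, h, Finset.sdiff_self]

-- ## composition with a single face

lemma dFace_dFace_singleton (x : Finset V) {k : ℕ} (hk : k < x.card)
    {B : Finset ℕ} (hB : B ⊆ Finset.range (x.card - 1)) :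
    dFace B (dFace {k} x) = dFace (insert k (B.image (shiftk k))) x := by
  rw [dFace_dFace]
  congr 1
  ext r
  simp only [Finset.mem_union, Finset.mem_singleton, Finset.mem_filter, Finset.mem_sdiff,
    Finset.mem_range, Finset.mem_insert, Finset.mem_image]
  have hcnt : ∀ s : ℕ, (Finset.range s \ {k}).card = if s ≤ k then s else s - 1 := by
    intro s
    by_cases hs : k < s
    · have hsub : ({k} : Finset ℕ) ⊆ Finset.range s :=
        Finset.singleton_subset_iff.2 (Finset.mem_range.2 hs)
      rw [Finset.card_sdiff_of_subset hsub, Finset.card_range, Finset.card_singleton, if_neg (by omega)]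
    · have hdisj : Disjoint (Finset.range s) ({k} : Finset ℕ) := by
        rw [Finset.disjoint_singleton_right, Finset.mem_range]
        omega
      rw [if_pos (by omega), Finset.sdiff_eq_self_of_disjoint hdisj, Finset.card_range]
  constructor
  · rintro (rfl | ⟨⟨hrn, hrk⟩, hcond⟩)
    · exact Or.inl rfl
    · right
      rw [hcnt r] at hcond
      by_cases hrk2 : r < k
      · rw [if_pos (by omega)] at hcond
        exact ⟨r, hcond, by unfold shiftk; rw [if_pos hrk2]⟩
      · rw [if_neg (by omega)] at hcond
        refine ⟨r - 1, hcond, ?_⟩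
        unfold shiftk
        rw [if_neg (by omega)]
        omega
  · rintro (rfl | ⟨b, hb, rfl⟩)
    · exact Or.inl rfl
    · right
      have hbn : b < x.card - 1 := Finset.mem_range.1 (hB hb)
      refine ⟨⟨by unfold shiftk; split <;> omega, shiftk_ne k b⟩, ?_⟩
      rw [hcnt]
      unfold shiftk
      by_cases hbk : b < k
      · rw [if_pos hbk, if_pos (by omega)]
        exact hb
      · rw [if_neg hbk, if_neg (by omega)]
        simpa using hb

-- ## chain-level application lemmas

lemma deltaSimplex_pos {j n : ℕ} (y : Finset V) (hcard : y.card = n) (hj : (j:ℤ) ≤ (n:ℤ) - 1) :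
    deltaSimplex (j:ℤ) y = ∑ U ∈ Finset.powersetCard (n - 1 - j) (Finset.range n),
      eC (dFace (part0 U) y) ⊗ₜ[ZMod 2] eC (dFace (part1 U) y) := by
  unfold deltaSimplex
  rw [if_pos ⟨Int.natCast_nonneg j, by rw [hcard]; exact hj⟩]
  rw [hcard, Int.toNat_natCast]

lemma deltaSimplex_degen {j : ℕ} (y : Finset V) (hj : ¬ ((j:ℤ) ≤ (y.card:ℤ) - 1)) :
    deltaSimplex (j:ℤ) y = 0 := by
  unfold deltaSimplex
  rw [if_neg (fun hc => hj hc.2)]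

lemma bdT_tmul (a b : Chains V) :
    bdT V (a ⊗ₜ[ZMod 2] b) = (bdMap V a) ⊗ₜ[ZMod 2] b + a ⊗ₜ[ZMod 2] (bdMap V b) := by
  unfold bdT
  rw [LinearMap.add_apply, TensorProduct.map_tmul, TensorProduct.map_tmul]
  rfl

lemma transp_tmul (a b : Chains V) :
    transp V (a ⊗ₜ[ZMod 2] b) = b ⊗ₜ[ZMod 2] a := rfl

lemma LHS2_eq (x : Finset V) (hx : 1 ≤ x.card) (j : ℕ) :
    deltaMap V (j : ℤ) (bdMap V (eC x)) =
      ∑ U ∈ Finset.powersetCard (x.card - 1 - j) (Finset.range x.card), ∑ k ∈ U,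
        eC (dFace (insert k (part0 U)) x) ⊗ₜ[ZMod 2] eC (dFace (insert k (part1 U)) x) := by
  set n := x.card with hn
  have hbd : bdMap V (eC x) = (∑ r ∈ Finset.range n, eC (dFace {r} x))
      + (if (0:ℕ) + 1 = n then eC (∅ : Finset V) else 0) := by
    have h0 : (∅ : Finset ℕ) ⊆ Finset.range n := Finset.empty_subset _
    have hb := bd_dFace x h0 (by simp only [Finset.card_empty]; omega)
    rw [dFace_empty] at hb
    rw [hb, Finset.sdiff_empty, Finset.card_empty]
    simp only [show ∀ r : ℕ, insert r (∅ : Finset ℕ) = {r} from fun r => rfl]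
    rfl
  rw [hbd, map_add, map_sum]
  have hphi : deltaMap V (j:ℤ) (if (0:ℕ) + 1 = n then eC (∅ : Finset V) else 0) = 0 := by
    split
    · rw [deltaMap_eC, deltaSimplex_degen]
      rw [Finset.card_empty]
      omega
    · exact map_zero _
  rw [hphi, add_zero]
  by_cases hj : (j:ℤ) ≤ (n:ℤ) - 2
  · have hsum : ∀ r ∈ Finset.range n, deltaMap V (j:ℤ) (eC (dFace {r} x))
        = ∑ U' ∈ Finset.powersetCard (n - 2 - j) (Finset.range (n-1)),
            eC (dFace (insert r (part0 (insert r (U'.image (shiftk r))))) x)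
              ⊗ₜ[ZMod 2] eC (dFace (insert r (part1 (insert r (U'.image (shiftk r))))) x) := by
      intro r hr
      rw [Finset.mem_range] at hr
      have hcard : (dFace {r} x).card = n - 1 := by
        rw [card_dFace,
          Finset.card_sdiff_of_subset (Finset.singleton_subset_iff.2 (Finset.mem_range.2 hr)),
          Finset.card_range, Finset.card_singleton]
      rw [deltaMap_eC, deltaSimplex_pos _ hcard (by omega)]
      have hnum : n - 1 - 1 - j = n - 2 - j := by omega
      rw [hnum]
      apply Finset.sum_congr rfl
      intro U' hU'
      rw [Finset.mem_powersetCard] at hU'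
      rw [dFace_dFace_singleton x hr ((part0_subset U').trans hU'.1),
          dFace_dFace_singleton x hr ((part1_subset U').trans hU'.1)]
      rw [← part0_shift U' r, ← part1_shift U' r, insert_erase', insert_erase']
    rw [Finset.sum_congr rfl hsum]
    have hreidx := sum_shift_reindex (M := TensorProduct (ZMod 2) (Chains V) (Chains V)) n (n-2-j)
      (fun U k => eC (dFace (insert k (part0 U)) x) ⊗ₜ[ZMod 2] eC (dFace (insert k (part1 U)) x))
    rw [hreidx]
    have hnum2 : n - 2 - j + 1 = n - 1 - j := by omega
    rw [hnum2]
  · have hz : ∀ r ∈ Finset.range n, deltaMap V (j:ℤ) (eC (dFace {r} x)) = 0 := by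
      intro r hr
      rw [Finset.mem_range] at hr
      have hcard : (dFace {r} x).card = n - 1 := by
        rw [card_dFace,
          Finset.card_sdiff_of_subset (Finset.singleton_subset_iff.2 (Finset.mem_range.2 hr)),
          Finset.card_range, Finset.card_singleton]
      rw [deltaMap_eC, deltaSimplex_degen]
      rw [hcard]
      omega
    rw [Finset.sum_congr rfl hz, Finset.sum_const_zero]
    have hnum : n - 1 - j = 0 := by omega
    rw [hnum, Finset.powersetCard_zero, Finset.sum_singleton, Finset.sum_empty]

-- ## telescope application

lemma tele_face (x : Finset V) {n : ℕ} {W : Finset ℕ} (hW : W ⊆ Finset.range n) :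
    ∑ v ∈ W, (eC (dFace (insert v (part0 (W.erase v))) x)
        ⊗ₜ[ZMod 2] eC (dFace (part1 (W.erase v)) x)
      + eC (dFace (part0 (W.erase v)) x)
        ⊗ₜ[ZMod 2] eC (dFace (insert v (part1 (W.erase v))) x))
    = eC (dFace (part1 W) x) ⊗ₜ[ZMod 2] eC (dFace (part0 W) x)
      + eC (dFace (part0 W) x) ⊗ₜ[ZMod 2] eC (dFace (part1 W) x) := by
  set F : ℕ → TensorProduct (ZMod 2) (Chains V) (Chains V) :=
    fun t => eC (dFace (cut0 W t) x) ⊗ₜ[ZMod 2] eC (dFace (cut1 W t) x) with hF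
  have hWlt : ∀ u ∈ W, u < n := fun u hu => Finset.mem_range.1 (hW hu)
  have hsummand : ∀ v ∈ W,
      (eC (dFace (insert v (part0 (W.erase v))) x)
        ⊗ₜ[ZMod 2] eC (dFace (part1 (W.erase v)) x)
      + eC (dFace (part0 (W.erase v)) x)
        ⊗ₜ[ZMod 2] eC (dFace (insert v (part1 (W.erase v))) x)) = F v + F (v+1) := by
    intro v hv
    rcases part_dichotomy hv with ⟨h0, _⟩ | ⟨_, h1⟩
    · rw [cut_ins0_of0 h0, cut_ins1_of0 h0, cut_nin1_of0 h0, cut_nin0_of0 h0]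
      exact add_comm _ _
    · rw [cut_ins0_of1 h1, cut_ins1_of1 h1, cut_nin1_of1 h1, cut_nin0_of1 h1]
  rw [Finset.sum_congr rfl hsummand]
  have hsteps : ∀ t, t < n → t ∉ W → F t = F (t+1) := by
    intro t _ htW
    show eC (dFace (cut0 W t) x) ⊗ₜ[ZMod 2] eC (dFace (cut1 W t) x) = _
    rw [cut0_step htW, cut1_step htW]
  rw [tele_W F hW hsteps]
  show eC (dFace (cut0 W 0) x) ⊗ₜ[ZMod 2] eC (dFace (cut1 W 0) x)
      + eC (dFace (cut0 W n) x) ⊗ₜ[ZMod 2] eC (dFace (cut1 W n) x) = _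
  rw [cut0_zero, cut1_zero, cut0_top hWlt, cut1_top hWlt]

-- ## phantom evaluation

lemma phantom0 (x : Finset V) (hn : 1 ≤ x.card) :
    (∑ U ∈ Finset.powersetCard (x.card - 1) (Finset.range x.card),
      (if (part0 U).card + 1 = x.card then eC (∅ : Finset V) else 0)
        ⊗ₜ[ZMod 2] eC (dFace (part1 U) x))
    = eC (∅ : Finset V) ⊗ₜ[ZMod 2] eC x := by
  set n := x.card with hnx
  have hmem : (Finset.range n).erase 0 ∈ Finset.powersetCard (n - 1) (Finset.range n) := by
    rw [Finset.mem_powersetCard]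
    exact ⟨Finset.erase_subset _ _,
      by rw [Finset.card_erase_of_mem (Finset.mem_range.2 (by omega)), Finset.card_range]⟩
  rw [Finset.sum_eq_single ((Finset.range n).erase 0)]
  · have hp0 : part0 ((Finset.range n).erase 0) = (Finset.range n).erase 0 := part0_erase0 n
    rw [hp0, Finset.card_erase_of_mem (Finset.mem_range.2 (by omega)), Finset.card_range,
      if_pos (by omega), part1_of_part0_self hp0, dFace_empty]
  · intro U hU hUne
    rw [Finset.mem_powersetCard] at hU
    have hiff : ¬ ((part0 U).card + 1 = n) := by
      intro hc
      have hsub : part0 U ⊆ U := part0_subset U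
      have heq : part0 U = U := Finset.eq_of_subset_of_card_le hsub (by omega)
      exact hUne (part0_eq_self_unique hU.1 hU.2 hn heq)
    rw [if_neg hiff, TensorProduct.zero_tmul]
  · intro habs
    exact absurd hmem habs

lemma phantom1 (x : Finset V) (hn : 1 ≤ x.card) :
    (∑ U ∈ Finset.powersetCard (x.card - 1) (Finset.range x.card),
      eC (dFace (part0 U) x)
        ⊗ₜ[ZMod 2] (if (part1 U).card + 1 = x.card then eC (∅ : Finset V) else 0))
    = eC x ⊗ₜ[ZMod 2] eC (∅ : Finset V) := by
  set n := x.card with hnx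
  have hmem : Finset.range (n-1) ∈ Finset.powersetCard (n - 1) (Finset.range n) := by
    rw [Finset.mem_powersetCard]
    exact ⟨by intro a ha; rw [Finset.mem_range] at *; omega, Finset.card_range _⟩
  rw [Finset.sum_eq_single (Finset.range (n-1))]
  · have hp1 : part1 (Finset.range (n-1)) = Finset.range (n-1) := part1_range (n-1)
    rw [hp1, Finset.card_range, if_pos (by omega), part0_of_part1_self hp1, dFace_empty]
  · intro U hU hUne
    rw [Finset.mem_powersetCard] at hU
    have hiff : ¬ ((part1 U).card + 1 = n) := by
      intro hc
      have hsub : part1 U ⊆ U := part1_subset U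
      have heq : part1 U = U := Finset.eq_of_subset_of_card_le hsub (by omega)
      exact hUne (part1_eq_self_unique hU.1 hU.2 hn heq)
    rw [if_neg hiff, TensorProduct.tmul_zero]
  · intro habs
    exact absurd hmem habs

-- ## splitting lemma for the index range

lemma sdiff_split {N : ℕ} {U : Finset ℕ} (hU : U ⊆ Finset.range N) :
    Finset.range N \ part0 U = (Finset.range N \ U) ∪ part1 U := by
  ext r
  simp only [Finset.mem_sdiff, Finset.mem_union]
  constructor
  · rintro ⟨hr, hr0⟩
    by_cases hrU : r ∈ U
    · rcases part_dichotomy hrU with h | h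
      · exact absurd h.1 hr0
      · exact Or.inr h.2
    · exact Or.inl ⟨hr, hrU⟩
  · rintro (⟨hr, hrU⟩ | hr1)
    · exact ⟨hr, fun hc => hrU (part0_subset U hc)⟩
    · exact ⟨hU (part1_subset U hr1), Finset.disjoint_right.1 (part_disjoint U) hr1⟩

lemma sdiff_split1 {N : ℕ} {U : Finset ℕ} (hU : U ⊆ Finset.range N) :
    Finset.range N \ part1 U = (Finset.range N \ U) ∪ part0 U := by
  ext r
  simp only [Finset.mem_sdiff, Finset.mem_union]
  constructor
  · rintro ⟨hr, hr1⟩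
    by_cases hrU : r ∈ U
    · rcases part_dichotomy hrU with h | h
      · exact Or.inr h.1
      · exact absurd h.2 hr1
    · exact Or.inl ⟨hr, hrU⟩
  · rintro (⟨hr, hrU⟩ | hr0)
    · exact ⟨hr, fun hc => hrU (part1_subset U hc)⟩
    · exact ⟨hU (part0_subset U hr0), Finset.disjoint_left.1 (part_disjoint U) hr0⟩

lemma disj_sdiff_part1 {N : ℕ} (U : Finset ℕ) :
    Disjoint (Finset.range N \ U) (part1 U) := by
  rw [Finset.disjoint_right]
  intro r hr hc
  exact (Finset.mem_sdiff.1 hc).2 (part1_subset U hr)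

lemma disj_sdiff_part0 {N : ℕ} (U : Finset ℕ) :
    Disjoint (Finset.range N \ U) (part0 U) := by
  rw [Finset.disjoint_right]
  intro r hr hc
  exact (Finset.mem_sdiff.1 hc).2 (part0_subset U hr)

lemma cancel4 {M : Type*} [AddCommMonoid M] [Module (ZMod 2) M] (a b c d : M) :
    ((a + b) + (c + d)) + (d + b) = a + c := by
  have hb := addself b
  have hd := addself d
  calc ((a + b) + (c + d)) + (d + b) = (a + c) + ((b + b) + (d + d)) := by abel
  _ = a + c := by rw [hb, hd, add_zero, add_zero]

lemma pc_self_range (N : ℕ) :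
    Finset.powersetCard N (Finset.range N) = {Finset.range N} := by
  have h := Finset.powersetCard_self (Finset.range N)
  rwa [Finset.card_range] at h

lemma perU (x : Finset V) {U : Finset ℕ} (hU : U ⊆ Finset.range x.card) :
    ((∑ r ∈ Finset.range x.card \ part0 U, eC (dFace (insert r (part0 U)) x))
        ⊗ₜ[ZMod 2] eC (dFace (part1 U) x)
      + eC (dFace (part0 U) x) ⊗ₜ[ZMod 2]
          (∑ r ∈ Finset.range x.card \ part1 U, eC (dFace (insert r (part1 U)) x)))
    + (∑ k ∈ U, eC (dFace (insert k (part0 U)) x) ⊗ₜ[ZMod 2] eC (dFace (insert k (part1 U)) x))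
    = ∑ v ∈ Finset.range x.card \ U,
        (eC (dFace (insert v (part0 U)) x) ⊗ₜ[ZMod 2] eC (dFace (part1 U) x)
         + eC (dFace (part0 U) x) ⊗ₜ[ZMod 2] eC (dFace (insert v (part1 U)) x)) := by
  rw [TensorProduct.sum_tmul, TensorProduct.tmul_sum]
  rw [sdiff_split hU, Finset.sum_union (disj_sdiff_part1 U),
      sdiff_split1 hU, Finset.sum_union (disj_sdiff_part0 U)]
  have hCsplit : (∑ k ∈ U,
        eC (dFace (insert k (part0 U)) x) ⊗ₜ[ZMod 2] eC (dFace (insert k (part1 U)) x))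
      = (∑ k ∈ part0 U,
          eC (dFace (insert k (part0 U)) x) ⊗ₜ[ZMod 2] eC (dFace (insert k (part1 U)) x))
        + (∑ k ∈ part1 U,
          eC (dFace (insert k (part0 U)) x) ⊗ₜ[ZMod 2] eC (dFace (insert k (part1 U)) x)) := by
    rw [← Finset.sum_union (part_disjoint U), part0_union_part1 U]
  rw [hCsplit]
  have h1 : (∑ k ∈ part1 U,
        eC (dFace (insert k (part0 U)) x) ⊗ₜ[ZMod 2] eC (dFace (insert k (part1 U)) x))
      = ∑ r ∈ part1 U, eC (dFace (insert r (part0 U)) x) ⊗ₜ[ZMod 2] eC (dFace (part1 U) x) := by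
    apply Finset.sum_congr rfl
    intro k hk
    rw [Finset.insert_eq_self.2 hk]
  have h0 : (∑ k ∈ part0 U,
        eC (dFace (insert k (part0 U)) x) ⊗ₜ[ZMod 2] eC (dFace (insert k (part1 U)) x))
      = ∑ r ∈ part0 U, eC (dFace (part0 U) x) ⊗ₜ[ZMod 2] eC (dFace (insert r (part1 U)) x) := by
    apply Finset.sum_congr rfl
    intro k hk
    rw [Finset.insert_eq_self.2 hk]
  rw [h1, h0, Finset.sum_add_distrib]
  exact cancel4 _ _ _ _

end Work
/-- the homotopy relation
`∂(Δᵢ(x)) + Δᵢ(∂x) = (1 + T) Δ_{i-1}(x)` for every simplex `x` and integer `i`. -/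
theorem stmt_11 {V : Type} [LinearOrder V] (i : ℤ) (x : Finset V) (hx : x.Nonempty) :
    bdT V (deltaMap V i (eC x)) + deltaMap V i (bdMap V (eC x)) =
      deltaMap V (i - 1) (eC x) + transp V (deltaMap V (i - 1) (eC x)) := by
  have hn : 1 ≤ x.card := Finset.card_pos.2 hx
  by_cases hi0 : 0 ≤ i
  case neg =>
    have hz : ∀ (k : ℤ), k < 0 → ∀ c : Chains V, deltaMap V k c = 0 := by
      intro k hk c
      unfold deltaMap
      rw [Finsupp.lift_apply, Finsupp.sum]
      apply Finset.sum_eq_zero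
      intro y _
      unfold deltaSimplex
      rw [if_neg (fun hc => absurd hc.1 (by omega))]
      exact smul_zero _
    rw [hz i (by omega), hz i (by omega), hz (i-1) (by omega), map_zero, map_zero]
  case pos =>
  obtain ⟨j, rfl⟩ : ∃ j : ℕ, i = (j : ℤ) := ⟨i.toNat, (Int.toNat_of_nonneg hi0).symm⟩
  by_cases hjn : (j : ℤ) ≤ (x.card : ℤ) - 1
  case neg =>
    have h1 : deltaMap V (j:ℤ) (eC x) = 0 := by
      rw [deltaMap_eC, deltaSimplex_degen x hjn]
    rw [h1, map_zero, zero_add, LHS2_eq x hn j]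
    have hc0 : x.card - 1 - j = 0 := by omega
    rw [hc0, Finset.powersetCard_zero, Finset.sum_singleton, Finset.sum_empty]
    by_cases hjn2 : (j:ℤ) = (x.card : ℤ)
    · have hji : (j:ℤ) - 1 = ((x.card - 1 : ℕ) : ℤ) := by omega
      rw [hji, deltaMap_eC, deltaSimplex_pos (n := x.card) x rfl (by omega)]
      have hc1 : x.card - 1 - (x.card - 1) = 0 := by omega
      rw [hc1, Finset.powersetCard_zero, Finset.sum_singleton, part0_empty, part1_empty,
        dFace_empty, transp_tmul]
      exact (addself _).symm
    · have h2 : deltaMap V ((j:ℤ) - 1) (eC x) = 0 := by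
        rw [deltaMap_eC]
        unfold deltaSimplex
        rw [if_neg (fun hc => absurd hc.2 (by omega))]
      rw [h2, map_zero, add_zero]
  case pos =>
  -- main case : 0 ≤ j ≤ x.card - 1
  have hΔ : deltaMap V (j:ℤ) (eC x)
      = ∑ U ∈ Finset.powersetCard (x.card - 1 - j) (Finset.range x.card),
          eC (dFace (part0 U) x) ⊗ₜ[ZMod 2] eC (dFace (part1 U) x) := by
    rw [deltaMap_eC, deltaSimplex_pos (n := x.card) x rfl hjn]
  rw [hΔ, map_sum]
  have hbdT : ∀ U ∈ Finset.powersetCard (x.card - 1 - j) (Finset.range x.card),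
      bdT V (eC (dFace (part0 U) x) ⊗ₜ[ZMod 2] eC (dFace (part1 U) x))
      = (((∑ r ∈ Finset.range x.card \ part0 U, eC (dFace (insert r (part0 U)) x))
            ⊗ₜ[ZMod 2] eC (dFace (part1 U) x)
          + eC (dFace (part0 U) x) ⊗ₜ[ZMod 2]
              (∑ r ∈ Finset.range x.card \ part1 U, eC (dFace (insert r (part1 U)) x)))
        + ((if (part0 U).card + 1 = x.card then eC (∅ : Finset V) else 0)
              ⊗ₜ[ZMod 2] eC (dFace (part1 U) x)
          + eC (dFace (part0 U) x) ⊗ₜ[ZMod 2]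
              (if (part1 U).card + 1 = x.card then eC (∅ : Finset V) else 0))) := by
    intro U hU
    rw [Finset.mem_powersetCard] at hU
    have hc0 : (part0 U).card ≤ x.card - 1 - j := by
      rw [← hU.2]
      exact Finset.card_le_card (part0_subset U)
    have hc1 : (part1 U).card ≤ x.card - 1 - j := by
      rw [← hU.2]
      exact Finset.card_le_card (part1_subset U)
    rw [bdT_tmul, bd_dFace x ((part0_subset U).trans hU.1) (by omega),
      bd_dFace x ((part1_subset U).trans hU.1) (by omega),
      TensorProduct.add_tmul, TensorProduct.tmul_add]
    abel
  rw [Finset.sum_congr rfl hbdT, LHS2_eq x hn j, ← Finset.sum_add_distrib]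
  have hkey : ∀ U ∈ Finset.powersetCard (x.card - 1 - j) (Finset.range x.card),
      ((((∑ r ∈ Finset.range x.card \ part0 U, eC (dFace (insert r (part0 U)) x))
            ⊗ₜ[ZMod 2] eC (dFace (part1 U) x)
          + eC (dFace (part0 U) x) ⊗ₜ[ZMod 2]
              (∑ r ∈ Finset.range x.card \ part1 U, eC (dFace (insert r (part1 U)) x)))
        + ((if (part0 U).card + 1 = x.card then eC (∅ : Finset V) else 0)
              ⊗ₜ[ZMod 2] eC (dFace (part1 U) x)
          + eC (dFace (part0 U) x) ⊗ₜ[ZMod 2]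
              (if (part1 U).card + 1 = x.card then eC (∅ : Finset V) else 0)))
        + ∑ k ∈ U, eC (dFace (insert k (part0 U)) x) ⊗ₜ[ZMod 2] eC (dFace (insert k (part1 U)) x))
      = (∑ v ∈ Finset.range x.card \ U,
          (eC (dFace (insert v (part0 U)) x) ⊗ₜ[ZMod 2] eC (dFace (part1 U) x)
           + eC (dFace (part0 U) x) ⊗ₜ[ZMod 2] eC (dFace (insert v (part1 U)) x)))
        + ((if (part0 U).card + 1 = x.card then eC (∅ : Finset V) else 0)
              ⊗ₜ[ZMod 2] eC (dFace (part1 U) x)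
          + eC (dFace (part0 U) x) ⊗ₜ[ZMod 2]
              (if (part1 U).card + 1 = x.card then eC (∅ : Finset V) else 0)) := by
    intro U hU
    rw [Finset.mem_powersetCard] at hU
    rw [← perU x hU.1]
    abel
  rw [Finset.sum_congr rfl hkey, Finset.sum_add_distrib]
  have hG := sum_insert_erase (M := TensorProduct (ZMod 2) (Chains V) (Chains V))
    x.card (x.card - 1 - j)
    (fun U v => eC (dFace (insert v (part0 U)) x) ⊗ₜ[ZMod 2] eC (dFace (part1 U) x)
      + eC (dFace (part0 U) x) ⊗ₜ[ZMod 2] eC (dFace (insert v (part1 U)) x))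
  rw [hG]
  have htf : ∀ W ∈ Finset.powersetCard (x.card - 1 - j + 1) (Finset.range x.card),
      (∑ v ∈ W,
        (eC (dFace (insert v (part0 (W.erase v))) x)
            ⊗ₜ[ZMod 2] eC (dFace (part1 (W.erase v)) x)
          + eC (dFace (part0 (W.erase v)) x)
            ⊗ₜ[ZMod 2] eC (dFace (insert v (part1 (W.erase v))) x)))
      = eC (dFace (part1 W) x) ⊗ₜ[ZMod 2] eC (dFace (part0 W) x)
        + eC (dFace (part0 W) x) ⊗ₜ[ZMod 2] eC (dFace (part1 W) x) := by
    intro W hW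
    rw [Finset.mem_powersetCard] at hW
    exact tele_face x hW.1
  rw [Finset.sum_congr rfl htf, Finset.sum_add_distrib, Finset.sum_add_distrib]
  by_cases hj0 : j = 0
  · -- j = 0 : right-hand side vanishes
    subst hj0
    have hR : deltaMap V ((0:ℕ) - 1 : ℤ) (eC x) = 0 := by
      rw [deltaMap_eC]
      unfold deltaSimplex
      rw [if_neg (fun hc => absurd hc.1 (by omega))]
    rw [hR, map_zero, add_zero]
    simp only [Nat.sub_zero]
    rw [phantom0 x hn, phantom1 x hn]
    have hc : x.card - 1 + 1 = x.card := by omega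
    rw [hc, pc_self_range x.card, Finset.sum_singleton, Finset.sum_singleton,
      part0_range, part1_range, dFace_empty, dFace_range]
    exact addself _
  · -- j ≥ 1
    have hP0 : (∑ U ∈ Finset.powersetCard (x.card - 1 - j) (Finset.range x.card),
        (if (part0 U).card + 1 = x.card then eC (∅ : Finset V) else 0)
          ⊗ₜ[ZMod 2] eC (dFace (part1 U) x)) = 0 := by
      apply Finset.sum_eq_zero
      intro U hU
      rw [Finset.mem_powersetCard] at hU
      have hcle : (part0 U).card ≤ x.card - 1 - j := by
        rw [← hU.2]
        exact Finset.card_le_card (part0_subset U)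
      rw [if_neg (by omega), TensorProduct.zero_tmul]
    have hP1 : (∑ U ∈ Finset.powersetCard (x.card - 1 - j) (Finset.range x.card),
        eC (dFace (part0 U) x) ⊗ₜ[ZMod 2]
          (if (part1 U).card + 1 = x.card then eC (∅ : Finset V) else 0)) = 0 := by
      apply Finset.sum_eq_zero
      intro U hU
      rw [Finset.mem_powersetCard] at hU
      have hcle : (part1 U).card ≤ x.card - 1 - j := by
        rw [← hU.2]
        exact Finset.card_le_card (part1_subset U)
      rw [if_neg (by omega), TensorProduct.tmul_zero]
    rw [hP0, hP1, add_zero, add_zero]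
    have hji : (j:ℤ) - 1 = ((j - 1 : ℕ) : ℤ) := by omega
    rw [hji, deltaMap_eC, deltaSimplex_pos (n := x.card) x rfl (by omega)]
    have hcnum : x.card - 1 - (j - 1) = x.card - 1 - j + 1 := by omega
    rw [hcnum, map_sum]
    have htr : ∀ W ∈ Finset.powersetCard (x.card - 1 - j + 1) (Finset.range x.card),
        transp V (eC (dFace (part0 W) x) ⊗ₜ[ZMod 2] eC (dFace (part1 W) x))
        = eC (dFace (part1 W) x) ⊗ₜ[ZMod 2] eC (dFace (part0 W) x) := by
      intro W _
      exact transp_tmul _ _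
    rw [Finset.sum_congr rfl htr]
    exact add_comm _ _
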